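/- Every valuation v : {X₁,…,Xₙ} → [0,1] satisfies exactly the chain formula determined by its induced total preorder, and consequently the disjunction over all chain formulas on X₁,…,Xₙ is valid in Gödel logic over [0,1]; moreover, if v maps every variable into [0,1), the disjunction of all restricted chains (chains with no variable in the equivalence class of ⊤) already has value 1. -/

import Mathlib

noncomputable def gimp (x y : ℝ) : ℝ := if x ≤ y then 1 else y

/-- Value of the relational formula A ▷ B: strict (A < B, i.e. (B→A)→B) if the
Boolean is `true`, and A ↔ B (i.e. (A→B)∧(B→A)) if it is `false`. -/
noncomputable def relVal (strict : Bool) (a b : ℝ) : ℝ :=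
  if strict then gimp (gimp b a) b else min (gimp a b) (gimp b a)

/-- The sequence ⊥, X_{π(1)}, …, X_{π(n)}, ⊤ of terms of a chain, evaluated under v. -/
noncomputable def chainTerm {n : ℕ} (v : Fin n → ℝ) (π : Equiv.Perm (Fin n))
    (j : Fin (n + 2)) : ℝ :=
  if h : (j : ℕ) = 0 then 0
  else if h' : (j : ℕ) = n + 1 then 1
  else v (π ⟨(j : ℕ) - 1, by omega⟩)

/-- The value of the chain ⊥ ▷₁ X_{π(1)} ▷₂ ⋯ ▷ₙ X_{π(n)} ▷_{n+1} ⊤ determined by a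
permutation π and relations r (true = strict <, false = ↔), as the conjunction
(minimum) of the values of the successive relational formulas. -/
noncomputable def chainVal {n : ℕ} (v : Fin n → ℝ) (π : Equiv.Perm (Fin n))
    (r : Fin (n + 1) → Bool) : ℝ :=
  (List.finRange (n + 1)).foldr
    (fun i acc => min (relVal (r i) (chainTerm v π i.castSucc) (chainTerm v π i.succ)) acc) 1

private lemma foldr_min_one {α : Type*} (g : α → ℝ) :
    ∀ l : List α, (∀ i ∈ l, g i = 1) →
      l.foldr (fun i acc => min (g i) acc) 1 = 1
  | [], _ => rfl
  | a :: l, h => by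
      rw [List.foldr_cons, foldr_min_one g l (fun i hi => h i (List.mem_cons_of_mem a hi)),
        h a List.mem_cons_self, min_self]

private lemma relVal_one {a b : ℝ} (hab : a ≤ b) :
    relVal (decide (a < b)) a b = 1 := by
  by_cases h : a < b
  · rw [decide_eq_true h]
    simp [relVal, gimp, not_le.2 h, hab]
  · have : a = b := le_antisymm hab (not_lt.1 h)
    subst this
    rw [decide_eq_false h]
    simp [relVal, gimp]

theorem chain_normal_form_valid (n : ℕ) :
    (∀ v : Fin n → ℝ, (∀ i, v i ∈ Set.Icc (0:ℝ) 1) →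
      ∃ (π : Equiv.Perm (Fin n)) (r : Fin (n + 1) → Bool),
        (∀ i j : Fin n, i ≤ j → v (π i) ≤ v (π j)) ∧
        (∀ i : Fin (n + 1), r i = true ↔ chainTerm v π i.castSucc < chainTerm v π i.succ) ∧
        (∃ i, r i = true) ∧
        chainVal v π r = 1) ∧
    (∀ v : Fin n → ℝ, (∀ i, v i ∈ Set.Ico (0:ℝ) 1) →
      ∃ (π : Equiv.Perm (Fin n)) (r : Fin (n + 1) → Bool),
        r (Fin.last n) = true ∧
        chainVal v π r = 1) := by
  have main : ∀ v : Fin n → ℝ, (∀ i, v i ∈ Set.Icc (0:ℝ) 1) →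
      ∃ (π : Equiv.Perm (Fin n)) (r : Fin (n + 1) → Bool),
        (∀ i j : Fin n, i ≤ j → v (π i) ≤ v (π j)) ∧
        (∀ i : Fin (n + 1), r i = true ↔ chainTerm v π i.castSucc < chainTerm v π i.succ) ∧
        (∃ i, r i = true) ∧
        chainVal v π r = 1 := by
    intro v hv
    set π := Tuple.sort v with hπ
    have hmono : ∀ i j : Fin n, i ≤ j → v (π i) ≤ v (π j) := by
      intro i j hij
      exact Tuple.monotone_sort v hij
    have hmem : ∀ j : Fin (n + 2), chainTerm v π j ∈ Set.Icc (0:ℝ) 1 := by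
      intro j
      unfold chainTerm
      split_ifs with h h'
      · exact ⟨le_rfl, zero_le_one⟩
      · exact ⟨zero_le_one, le_rfl⟩
      · exact hv _
    have hstep : ∀ i : Fin (n + 1), chainTerm v π i.castSucc ≤ chainTerm v π i.succ := by
      intro i
      rcases Nat.eq_zero_or_pos i.val with h0 | h0
      · have h1 : chainTerm v π i.castSucc = 0 := by
          unfold chainTerm
          rw [dif_pos (by simpa using h0)]
        rw [h1]; exact (hmem i.succ).1
      rcases eq_or_lt_of_le (Nat.lt_succ_iff.1 i.isLt) with hn | hn
      · have h1 : chainTerm v π i.succ = 1 := by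
          unfold chainTerm
          rw [dif_neg (by simp), dif_pos (by simp [hn])]
        rw [h1]; exact (hmem i.castSucc).2
      · have h1 : chainTerm v π i.castSucc = v (π ⟨i.val - 1, by omega⟩) := by
          unfold chainTerm
          rw [dif_neg (by simpa using (by omega : ¬ i.val = 0)),
            dif_neg (by simpa using (by omega : ¬ i.val = n + 1))]
          simp
        have h2 : chainTerm v π i.succ = v (π ⟨i.val, by omega⟩) := by
          unfold chainTerm
          rw [dif_neg (by simp), dif_neg (by simpa using (by omega : ¬ i.val + 1 = n + 1))]
          simp
        rw [h1, h2]
        exact hmono _ _ (Fin.mk_le_mk.2 (by omega))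
    refine ⟨π, fun i => decide (chainTerm v π i.castSucc < chainTerm v π i.succ),
      hmono, fun i => by simp, ?_, ?_⟩
    · by_contra h
      push_neg at h
      have heq : ∀ i : Fin (n + 1), chainTerm v π i.castSucc = chainTerm v π i.succ := by
        intro i
        have h' : ¬ chainTerm v π i.castSucc < chainTerm v π i.succ := by
          simpa using h i
        exact le_antisymm (hstep i) (not_lt.1 h')
      have hall : ∀ j : Fin (n + 2), chainTerm v π j = 0 := by
        intro j
        induction j using Fin.induction with
        | zero => simp [chainTerm]
        | succ i ih => rw [← heq i]; exact ih
      have hlast : chainTerm v π (Fin.last (n + 1)) = 1 := by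
        unfold chainTerm
        rw [dif_neg (by simp), dif_pos (by simp)]
      rw [hall] at hlast
      exact zero_ne_one hlast
    · unfold chainVal
      apply foldr_min_one
      intro i _
      exact relVal_one (hstep i)
  refine ⟨main, ?_⟩
  intro v hv
  obtain ⟨π, r, hmono, hchar, hex, hval⟩ :=
    main v (fun i => ⟨(hv i).1, le_of_lt (hv i).2⟩)
  refine ⟨π, r, ?_, hval⟩
  rw [hchar]
  have hsucc : chainTerm v π (Fin.last n).succ = 1 := by
    unfold chainTerm
    rw [dif_neg (by simp), dif_pos (by simp)]
  rw [hsucc]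
  rcases Nat.eq_zero_or_pos n with h0 | h0
  · have : chainTerm v π (Fin.last n).castSucc = 0 := by
      unfold chainTerm
      rw [dif_pos (by simp [h0])]
    rw [this]; exact zero_lt_one
  · have : chainTerm v π (Fin.last n).castSucc = v (π ⟨n - 1, by omega⟩) := by
      unfold chainTerm
      rw [dif_neg (by simpa using (by omega : ¬ n = 0)),
        dif_neg (by simpa using (by omega : ¬ n = n + 1))]
      simp
    rw [this]
    exact (hv _).2
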